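/- Let n ≥ 2, let p = n² + 3 be prime, let D be the squarefree part of n² + 4, and K = ℚ(√D) with ring of integers ℤ_K. Let u ∈ ℤ_Kˣ be a unit with N(u) = −1, let ℓ be an odd positive integer with u^{2ℓ} + u^{−2ℓ} + 1 = p, and put ∂ := 1 + u^ℓ + u^{−ℓ}, so that 𝔭 := ∂ℤ_K is a prime ideal with residue ring ℤ_K/𝔭 of cardinality p. Suppose the multiplicative order of the image of u in (ℤ_K/∂ℤ_K)ˣ is 3ℓ and the multiplicative order of the image of u in (ℤ_K/∂^τℤ_K)ˣ is 6ℓ. Then the image of −u in ℤ_K/∂ℤ_K is not a square in that ring, while the image of −u in ℤ_K/∂^τℤ_K is a square. -/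
import Mathlib

open NumberField

lemma euler_aux {F : Type*} [Field F] [Finite F] {p m : ℕ} (hpp : p.Prime)
    (hcard : Nat.card F = p) (hm : p = 2 * m + 1) (hmodd : Odd m)
    (hp0 : (p : F) = 0) (x : Fˣ) :
    IsSquare (-(x : F)) ↔ (x : F) ^ m = -1 := by
  have : Fintype F := Fintype.ofFinite F
  have hcardF : Fintype.card F = p := by rw [← Nat.card_eq_fintype_card, hcard]
  have hchar : ringChar F = p := CharP.ringChar_of_prime_eq_zero hpp hp0
  obtain ⟨k, hk⟩ := hmodd
  have hp2 : ringChar F ≠ 2 := by rw [hchar]; omega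
  have hxne : -(x : F) ≠ 0 := neg_ne_zero.mpr (Units.ne_zero x)
  rw [FiniteField.isSquare_iff hp2 hxne, hcardF,
    show p / 2 = m by omega, Odd.neg_pow ⟨k, hk⟩, neg_eq_iff_eq_neg]

lemma euler_ns {F : Type*} [Field F] [Finite F] {p m ℓ : ℕ} (hpp : p.Prime)
    (hcard : Nat.card F = p) (hm : p = 2 * m + 1) (hmodd : Odd m)
    (hp0 : (p : F) = 0) (hℓodd : Odd ℓ) (x : Fˣ)
    (hx : orderOf x = 3 * ℓ) : ¬ IsSquare (-(x : F)) := by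
  rw [euler_aux hpp hcard hm hmodd hp0 x]
  have hdvd : 3 * ℓ ∣ 2 * m := by
    rw [← hx]
    have := orderOf_dvd_natCard x
    rwa [Nat.card_units, hcard, hm, Nat.add_sub_cancel] at this
  have h3odd : Odd (3 * ℓ) := (by decide : Odd 3).mul hℓodd
  have hdm : 3 * ℓ ∣ m := by
    refine (Nat.Coprime.dvd_of_dvd_mul_left ?_ hdvd)
    exact Nat.coprime_two_right.mpr h3odd
  have hx1 : (x : F) ^ m = 1 := by
    rw [← orderOf_dvd_iff_pow_eq_one, orderOf_units, hx]; exact hdm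
  rw [hx1]
  intro h
  have hchar : ringChar F = p := CharP.ringChar_of_prime_eq_zero hpp hp0
  obtain ⟨k, hk⟩ := hmodd
  exact Ring.neg_one_ne_one_of_char_ne_two (by rw [hchar]; omega) h.symm

lemma euler_sq {F : Type*} [Field F] [Finite F] {p m ℓ : ℕ} (hpp : p.Prime)
    (hcard : Nat.card F = p) (hm : p = 2 * m + 1) (hmodd : Odd m)
    (hp0 : (p : F) = 0) (hℓpos : 0 < ℓ) (x : Fˣ)
    (hx : orderOf x = 6 * ℓ) : IsSquare (-(x : F)) := by
  rw [euler_aux hpp hcard hm hmodd hp0 x]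
  have hdvd : 6 * ℓ ∣ 2 * m := by
    rw [← hx]
    have := orderOf_dvd_natCard x
    rwa [Nat.card_units, hcard, hm, Nat.add_sub_cancel] at this
  obtain ⟨c, hc2⟩ := hdvd
  have hc : m = 3 * ℓ * c := by
    have h2 : 2 * m = 2 * (3 * ℓ * c) := by rw [hc2]; ring
    omega
  have hcodd : Odd c := (Nat.odd_mul.mp (hc ▸ hmodd)).2
  have hy2 : ((x : F) ^ (3 * ℓ)) ^ 2 = 1 := by
    rw [← pow_mul, ← orderOf_dvd_iff_pow_eq_one, orderOf_units, hx]
    exact ⟨1, by ring⟩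
  have hy1 : (x : F) ^ (3 * ℓ) ≠ 1 := by
    intro h
    have h' := orderOf_dvd_iff_pow_eq_one.mpr h
    rw [orderOf_units, hx] at h'
    have := Nat.le_of_dvd (by positivity) h'
    omega
  have hyneg : (x : F) ^ (3 * ℓ) = -1 := by
    have h0 : ((x : F) ^ (3 * ℓ) - 1) * ((x : F) ^ (3 * ℓ) + 1) = 0 := by
      linear_combination hy2
    rcases mul_eq_zero.mp h0 with h | h
    · exact absurd (sub_eq_zero.mp h) hy1
    · exact eq_neg_of_add_eq_zero_left h
  rw [hc, pow_mul, hyneg, Odd.neg_one_pow hcodd]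

set_option maxHeartbeats 1000000 in
set_option synthInstance.maxHeartbeats 1000000 in
/-- Let `p = n² + 3` be prime, `D` the squarefree part of `n² + 4`, `K = ℚ(√D)`,
`u ∈ ℤ_Kˣ` of norm `−1`, `ℓ` odd positive with `u^{2ℓ} + u^{−2ℓ} + 1 = p`, and
`∂ := 1 + u^ℓ + u^{−ℓ}`, so that `𝔭 := ∂ℤ_K` is a prime ideal with residue ring of
cardinality `p`. If the order of `u` mod `∂` is `3ℓ` and its order mod `∂^τ = 2 − ∂`
is `6ℓ`, then `−u` is not a square mod `∂`, while `−u` is a square mod `∂^τ`. -/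
theorem stmt_12 (n : ℕ) (hn : 2 ≤ n) (p : ℕ) (hp : p = n ^ 2 + 3) (hpp : p.Prime)
    (D f : ℕ) (hDsf : Squarefree D) (hf : 0 < f) (hfac : n ^ 2 + 4 = f ^ 2 * D)
    (K : Type*) [Field K] [NumberField K]
    (hdeg : Module.finrank ℚ K = 2)
    (sqrtD : K) (hsq : sqrtD ^ 2 = (D : K))
    (u : (𝓞 K)ˣ) (hu : Algebra.norm ℚ ((u : 𝓞 K) : K) = -1)
    (ℓ : ℕ) (hℓodd : Odd ℓ) (hℓpos : 0 < ℓ)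
    (hpu : ((p : ℤ) : 𝓞 K)
        = (u : 𝓞 K) ^ (2 * ℓ) + ((u⁻¹ : (𝓞 K)ˣ) : 𝓞 K) ^ (2 * ℓ) + 1)
    (del : 𝓞 K) (hdel : del = 1 + (u : 𝓞 K) ^ ℓ + ((u⁻¹ : (𝓞 K)ˣ) : 𝓞 K) ^ ℓ)
    (hprime : (Ideal.span {del}).IsPrime)
    (hcard : Nat.card (𝓞 K ⧸ Ideal.span {del}) = p)
    (h3 : orderOf (Units.map (Ideal.Quotient.mk (Ideal.span {del})).toMonoidHom u) = 3 * ℓ)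
    (h6 : orderOf (Units.map (Ideal.Quotient.mk (Ideal.span {2 - del})).toMonoidHom u) = 6 * ℓ) :
    ¬ IsSquare (Ideal.Quotient.mk (Ideal.span {del}) (-(u : 𝓞 K))) ∧
    IsSquare (Ideal.Quotient.mk (Ideal.span {2 - del}) (-(u : 𝓞 K))) := by
  -- `n` is even, so `p = 2m+1` with `m` odd
  obtain ⟨j, hj⟩ : ∃ j, n = 2 * j := by
    rcases Nat.even_or_odd n with he | ho
    · obtain ⟨j, hj⟩ := he; exact ⟨j, by omega⟩
    · exfalso
      obtain ⟨j, hj⟩ := ho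
      have h2 : p = 2 * (2 * j ^ 2 + 2 * j + 2) := by rw [hp, hj]; ring
      have := hpp.eq_one_or_self_of_dvd 2 ⟨_, h2⟩
      omega
  have hm : p = 2 * (2 * j ^ 2 + 1) + 1 := by rw [hp, hj]; ring
  have hmodd : Odd (2 * j ^ 2 + 1) := ⟨j ^ 2, by ring⟩
  -- the key algebraic identity `∂(2−∂) = −p`
  have hmul : del * (2 - del) = -((p : ℤ) : 𝓞 K) := by
    have h1 : ((u : 𝓞 K)) ^ ℓ * (((u⁻¹ : (𝓞 K)ˣ)) : 𝓞 K) ^ ℓ = 1 := by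
      rw [← mul_pow, Units.mul_inv, one_pow]
    rw [hdel]
    linear_combination hpu - 2 * h1
  -- `p` lies in both ideals
  have hpcast : ((p : ℕ) : 𝓞 K) = ((p : ℤ) : 𝓞 K) := by push_cast; ring
  have hpI1 : ((p : ℕ) : 𝓞 K) ∈ Ideal.span {del} := by
    have hc : ((p : ℕ) : 𝓞 K) = del * (del - 2) := by
      rw [hpcast]; linear_combination hmul
    rw [hc]
    exact Ideal.mul_mem_right _ _ (Ideal.mem_span_singleton_self del)
  have hpI2 : ((p : ℕ) : 𝓞 K) ∈ Ideal.span {2 - del} := by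
    have hc : ((p : ℕ) : 𝓞 K) = (2 - del) * (-del) := by
      rw [hpcast]; linear_combination hmul
    rw [hc]
    exact Ideal.mul_mem_right _ _ (Ideal.mem_span_singleton_self (2 - del))
  have hp0_1 : ((p : ℕ) : 𝓞 K ⧸ Ideal.span {del}) = 0 := by
    rw [← map_natCast (Ideal.Quotient.mk (Ideal.span {del}))]
    exact Ideal.Quotient.eq_zero_iff_mem.mpr hpI1
  have hp0_2 : ((p : ℕ) : 𝓞 K ⧸ Ideal.span {2 - del}) = 0 := by
    rw [← map_natCast (Ideal.Quotient.mk (Ideal.span {2 - del}))]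
    exact Ideal.Quotient.eq_zero_iff_mem.mpr hpI2
  -- norms
  have hrank : Fintype.card (Module.Free.ChooseBasisIndex ℤ (𝓞 K)) = 2 := by
    rw [← Module.finrank_eq_card_chooseBasisIndex, RingOfIntegers.rank, hdeg]
  have hnormp : Ideal.absNorm (Ideal.span {((p : ℤ) : 𝓞 K)}) = p ^ 2 := by
    rw [Ideal.absNorm_span_singleton,
      show ((p : ℤ) : 𝓞 K) = algebraMap ℤ (𝓞 K) ((p : ℤ)) from rfl,
      Algebra.norm_algebraMap_of_basis (Module.Free.chooseBasis ℤ (𝓞 K)), hrank,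
      Int.natAbs_pow]
    simp
  have hA1 : Ideal.absNorm (Ideal.span {del}) = p := by
    rw [Ideal.absNorm_apply, Submodule.cardQuot_apply]; exact hcard
  have hA2 : Ideal.absNorm (Ideal.span {2 - del}) = p := by
    have hprod : Ideal.absNorm (Ideal.span {del}) * Ideal.absNorm (Ideal.span {2 - del})
        = p ^ 2 := by
      rw [← map_mul, Ideal.span_singleton_mul_span_singleton, hmul,
        Ideal.span_singleton_neg, hnormp]
    rw [hA1] at hprod
    exact Nat.eq_of_mul_eq_mul_left hpp.pos (hprod.trans (pow_two p))
  have hcard2 : Nat.card (𝓞 K ⧸ Ideal.span {2 - del}) = p := by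
    rw [← Submodule.cardQuot_apply, ← Ideal.absNorm_apply, hA2]
  have hprime2 : (Ideal.span {2 - del}).IsPrime :=
    Ideal.isPrime_of_irreducible_absNorm (by rw [hA2]; exact hpp.prime.irreducible)
  haveI := hprime
  haveI := hprime2
  haveI : Finite (𝓞 K ⧸ Ideal.span {del}) :=
    Nat.finite_of_card_ne_zero (by rw [hcard]; exact hpp.pos.ne')
  haveI : Finite (𝓞 K ⧸ Ideal.span {2 - del}) :=
    Nat.finite_of_card_ne_zero (by rw [hcard2]; exact hpp.pos.ne')
  letI : Field (𝓞 K ⧸ Ideal.span {del}) := (Finite.isField_of_domain _).toField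
  letI : Field (𝓞 K ⧸ Ideal.span {2 - del}) := (Finite.isField_of_domain _).toField
  constructor
  · have hres := euler_ns hpp hcard hm hmodd hp0_1 hℓodd
      (Units.map (Ideal.Quotient.mk (Ideal.span {del})).toMonoidHom u) h3
    rw [map_neg]
    exact hres
  · have hres := euler_sq hpp hcard2 hm hmodd hp0_2 hℓpos
      (Units.map (Ideal.Quotient.mk (Ideal.span {2 - del})).toMonoidHom u) h6
    rw [map_neg]
    exact hres
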